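/- Let p and q be two different odd primes and let a ∈ (ℤ/pqℤ)* be such that the reduction of a modulo p is a generator of (ℤ/pℤ)* and a^{(p−1)/2} ≡ −1 (mod pq). Write S = S_{pq}(a) and λ = |S ∩ (S+1)|. If λ ≡ −2 (mod q), then for t = (λ+2)/q and any permutations π_2,…,π_t of the p cocliques, the graph F_{(π_2,…,π_t)} built from t disjoint copies of the Cayley graph Γ_{pq}(a) (each with its spread of 1-regular cocliques given by the cosets of the subgroup generated by p) is a Neumaier graph with parameters (tpq, p−1+λ+1, λ; 1, λ+2), i.e., with parameters (tpq, p+λ, λ; 1, λ+2). -/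

import Mathlib

/-- A finite simple graph is edge-regular with parameters `(v, k, λ)` if it has exactly
`v` vertices, every vertex has exactly `k` neighbours, it has at least one edge, and any
two adjacent vertices have exactly `λ` common neighbours. -/
def IsEdgeRegular {V : Type*} (G : SimpleGraph V) (v k l : ℕ) : Prop :=
  Nat.card V = v ∧ (∀ x : V, (G.neighborSet x).ncard = k) ∧ (∃ x y : V, G.Adj x y) ∧
    ∀ x y : V, G.Adj x y → (G.commonNeighbors x y).ncard = l

/-- A Neumaier graph with parameters `(v, k, λ; e, s)` is a non-complete edge-regular
graph with parameters `(v, k, λ)` containing an `e`-regular clique of size `s`. -/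
def IsNeumaier {V : Type*} (G : SimpleGraph V) (v k l e s : ℕ) : Prop :=
  IsEdgeRegular G v k l ∧ G ≠ ⊤ ∧ 0 < e ∧
    ∃ S : Set V, G.IsClique S ∧ S.ncard = s ∧
      ∀ x ∉ S, {y ∈ S | G.Adj x y}.ncard = e

/-- `S_n(a)`: the set of powers of the unit `a` in `ℤ/nℤ`. -/
def powSet (n : ℕ) (a : (ZMod n)ˣ) : Set (ZMod n) :=
  {x : ZMod n | ∃ j : ℕ, x = (a : ZMod n) ^ j}

open Set in
lemma ncard_prod_fiber {α β : Type*} [Fintype α] [Fintype β] (P : α → Set β) :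
    {v : α × β | v.2 ∈ P v.1}.ncard = ∑ j, (P j).ncard := by
  classical
  have e : {v : α × β | v.2 ∈ P v.1} ≃ Σ j, P j :=
    { toFun := fun v => ⟨v.1.1, v.1.2, v.2⟩
      invFun := fun s => ⟨(s.1, s.2.1), s.2.2⟩
      left_inv := by rintro ⟨⟨j, b⟩, h⟩; rfl
      right_inv := by rintro ⟨j, b, h⟩; rfl }
  rw [← Nat.card_coe_set_eq, Nat.card_congr e, Nat.card_eq_fintype_card,
    Fintype.card_sigma]
  simp [← Nat.card_coe_set_eq, Nat.card_eq_fintype_card]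

lemma zmod_fiber_ncard (p q : ℕ) (hp : p ≠ 0) (hq : q ≠ 0) (hco : Nat.Coprime p q) (w : ZMod p) :
    {z : ZMod (p*q) | ZMod.castHom (dvd_mul_right p q) (ZMod p) z = w}.ncard = q := by
  haveI : NeZero (p * q) := ⟨Nat.mul_ne_zero hp hq⟩
  let e := ZMod.chineseRemainder hco
  have hfst : ∀ z : ZMod (p*q), (e z).1 = ZMod.castHom (dvd_mul_right p q) (ZMod p) z := by
    intro z
    show ((ZMod.castHom (show Nat.lcm p q ∣ p * q by simp [Nat.lcm_dvd_iff])
      (ZMod p × ZMod q)) z).1 = _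
    rw [ZMod.castHom_apply, ZMod.castHom_apply, Prod.fst_zmod_cast]
  have hset : {z : ZMod (p*q) | ZMod.castHom (dvd_mul_right p q) (ZMod p) z = w}
      = ⇑e.toEquiv ⁻¹' ({w} ×ˢ Set.univ) := by
    ext z
    simp only [Set.mem_preimage, Set.mem_prod, Set.mem_singleton_iff, Set.mem_univ,
      and_true, Set.mem_setOf_eq, ← hfst]
    rfl
  rw [hset, ← Equiv.image_symm_eq_preimage, Set.ncard_image_of_injective _ e.toEquiv.symm.injective,
    Set.singleton_prod, Set.ncard_image_of_injective _ (Prod.mk_right_injective w),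
    Set.ncard_univ, Nat.card_zmod]

lemma powSet_props (p q : ℕ) (hp : p.Prime) (hq : q.Prime) (hpodd : Odd p)
    (a : (ZMod (p * q))ˣ)
    (hgen : ∀ x : (ZMod p)ˣ, x ∈ Subgroup.zpowers
      (Units.map (ZMod.castHom (dvd_mul_right p q) (ZMod p)).toMonoidHom a))
    (hneg : (a : ZMod (p * q)) ^ ((p - 1) / 2) = -1) :
    (∀ s ∈ powSet (p*q) a, ∀ u ∈ powSet (p*q) a, s * u ∈ powSet (p*q) a) ∧
    (∀ d ∈ powSet (p*q) a, ∃ d' ∈ powSet (p*q) a, d * d' = 1) ∧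
    Set.InjOn (ZMod.castHom (dvd_mul_right p q) (ZMod p)) (powSet (p*q) a) ∧
    (∀ w : ZMod p, w ≠ 0 →
      ∃ s ∈ powSet (p*q) a, ZMod.castHom (dvd_mul_right p q) (ZMod p) s = w) ∧
    (∀ s ∈ powSet (p*q) a, ZMod.castHom (dvd_mul_right p q) (ZMod p) s ≠ 0) ∧
    ((-1 : ZMod (p*q)) ∈ powSet (p*q) a) := by
  set T : Set (ZMod (p*q)) := powSet (p*q) a with hTdef
  set r : ZMod (p*q) →+* ZMod p := ZMod.castHom (dvd_mul_right p q) (ZMod p) with hrdef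
  haveI : Fact p.Prime := ⟨hp⟩
  haveI : Fact q.Prime := ⟨hq⟩
  haveI : NeZero (p * q) := ⟨Nat.mul_ne_zero hp.ne_zero hq.ne_zero⟩
  set ψ : (ZMod (p*q))ˣ →* (ZMod p)ˣ := Units.map r.toMonoidHom with hψ
  have hcoe : ∀ j : ℕ, r ((a : ZMod (p*q)) ^ j) = ((ψ a) ^ j : (ZMod p)ˣ) := by
    intro j
    rw [map_pow]
    norm_cast
  have hordψ : orderOf (ψ a) = p - 1 := by
    rw [orderOf_eq_card_of_forall_mem_zpowers hgen, Nat.card_eq_fintype_card,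
      ZMod.card_units_eq_totient, Nat.totient_prime hp]
  have hu : a ^ ((p - 1) / 2) = (-1 : (ZMod (p*q))ˣ) := by
    apply Units.ext
    push_cast
    exact hneg
  have hp1 : a ^ (p - 1) = 1 := by
    have h2 : (p - 1) / 2 * 2 = p - 1 :=
      Nat.div_mul_cancel (Nat.Odd.sub_odd hpodd odd_one).two_dvd
    calc a ^ (p - 1) = (a ^ ((p - 1) / 2)) ^ 2 := by rw [← pow_mul, h2]
    _ = 1 := by rw [hu]; simp
  have horddvd : orderOf a ∣ p - 1 := orderOf_dvd_of_pow_eq_one hp1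
  have hmul : ∀ s ∈ T, ∀ u ∈ T, s * u ∈ T := by
    rintro s ⟨j, rfl⟩ u ⟨k, rfl⟩
    exact ⟨j + k, (pow_add _ _ _).symm⟩
  have hinv : ∀ d ∈ T, ∃ d' ∈ T, d * d' = 1 := by
    rintro d ⟨j, rfl⟩
    have hm : 0 < orderOf a := orderOf_pos a
    refine ⟨(a : ZMod (p*q)) ^ (j * (orderOf a - 1)), ⟨_, rfl⟩, ?_⟩
    rw [← pow_add]
    have : j + j * (orderOf a - 1) = orderOf a * j := by
      obtain ⟨m, hm'⟩ := Nat.exists_eq_succ_of_ne_zero hm.ne'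
      rw [hm']; simp [Nat.succ_sub_one]; ring
    rw [this, pow_mul]
    have : (a : ZMod (p*q)) ^ orderOf a = ((a ^ orderOf a : (ZMod (p*q))ˣ) : ZMod (p*q)) := by
      push_cast; rfl
    rw [this, pow_orderOf_eq_one, Units.val_one, one_pow]
  have hinj : Set.InjOn r T := by
    rintro s ⟨j, rfl⟩ u ⟨k, rfl⟩ h
    rw [hcoe, hcoe] at h
    have h2 : (ψ a) ^ j = (ψ a) ^ k := Units.ext h
    rw [pow_eq_pow_iff_modEq] at h2
    have h3 : j ≡ k [MOD orderOf a] := h2.of_dvd (hordψ ▸ horddvd)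
    rw [← pow_eq_pow_iff_modEq] at h3
    rw [show ((a : ZMod (p*q)) ^ j) = ((a ^ j : (ZMod (p*q))ˣ) : ZMod (p*q)) by push_cast; rfl,
      show ((a : ZMod (p*q)) ^ k) = ((a ^ k : (ZMod (p*q))ˣ) : ZMod (p*q)) by push_cast; rfl, h3]
  have hsurj : ∀ w : ZMod p, w ≠ 0 → ∃ s ∈ T, r s = w := by
    intro w hw
    lift w to (ZMod p)ˣ using isUnit_iff_ne_zero.mpr hw
    have hzp := hgen w
    have hfin : IsOfFinOrder (ψ a) := by
      rw [← orderOf_pos_iff, hordψ]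
      exact Nat.sub_pos_of_lt hp.one_lt
    rw [← hfin.mem_powers_iff_mem_zpowers] at hzp
    obtain ⟨m, hm⟩ := hzp
    exact ⟨(a : ZMod (p*q)) ^ m, ⟨m, rfl⟩, by rw [hcoe]; exact congrArg Units.val hm⟩
  have hnz : ∀ s ∈ T, r s ≠ 0 := by
    rintro s ⟨j, rfl⟩
    rw [hcoe]
    exact Units.ne_zero _
  exact ⟨hmul, hinv, hinj, hsurj, hnz, ⟨(p - 1) / 2, hneg.symm⟩⟩

/-- Let `p ≠ q` be odd primes and `a ∈ (ℤ/pqℤ)*` with `a mod p` a generator of `(ℤ/pℤ)*`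
and `a^((p-1)/2) ≡ -1 (mod pq)`.  Put `S = S_{pq}(a)` and `λ = |S ∩ (S+1)|`, and suppose
`λ ≡ -2 (mod q)`, say `λ + 2 = q t`.  Take `t` disjoint copies of the Cayley graph
`Γ_{pq}(a)`, each with the spread of `1`-regular cocliques given by the cosets of the
subgroup generated by `p` (i.e. the fibres of reduction mod `p`), and permutations
`π₁ = id, π₂, …, π_t` of the `p` cocliques.  Then the resulting graph
`F_{(π₂,…,π_t)}` — distinct vertices `(i, x)` and `(j, y)` adjacent iff (`i = j` and
`x ∼ y` in `Γ_{pq}(a)`) or `π_i⁻¹(x mod p) = π_j⁻¹(y mod p)` — is a Neumaier graph with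
parameters `(t p q, p + λ, λ; 1, λ + 2)`. -/
theorem construction_pq_neumaier (p q : ℕ) (hp : p.Prime) (hq : q.Prime)
    (hpodd : Odd p) (hqodd : Odd q) (hpq : p ≠ q) (a : (ZMod (p * q))ˣ)
    (hgen : ∀ x : (ZMod p)ˣ, x ∈ Subgroup.zpowers
      (Units.map (ZMod.castHom (dvd_mul_right p q) (ZMod p)).toMonoidHom a))
    (hneg : (a : ZMod (p * q)) ^ ((p - 1) / 2) = -1)
    (lam : ℕ)
    (hlam : lam = (powSet (p * q) a ∩ ((· + 1) '' powSet (p * q) a)).ncard)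
    (hmod : (lam : ℤ) ≡ -2 [ZMOD q])
    (t : ℕ) (htq : q * t = lam + 2) (ht : 0 < t)
    (Γ : SimpleGraph (ZMod (p * q)))
    (hΓ : ∀ x y : ZMod (p * q), Γ.Adj x y ↔ x ≠ y ∧ x - y ∈ powSet (p * q) a)
    (π : Fin t → Equiv.Perm (ZMod p)) (hπ : π ⟨0, ht⟩ = 1)
    (F : SimpleGraph (Fin t × ZMod (p * q)))
    (hF : ∀ x y : Fin t × ZMod (p * q), F.Adj x y ↔ (x ≠ y ∧
      ((x.1 = y.1 ∧ Γ.Adj x.2 y.2) ∨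
        (π x.1)⁻¹ (ZMod.castHom (dvd_mul_right p q) (ZMod p) x.2) =
          (π y.1)⁻¹ (ZMod.castHom (dvd_mul_right p q) (ZMod p) y.2)))) :
    IsNeumaier F (t * (p * q)) (p + lam) lam 1 (lam + 2) := by
  classical
  haveI : Fact p.Prime := ⟨hp⟩
  haveI : Fact q.Prime := ⟨hq⟩
  haveI : NeZero (p * q) := ⟨Nat.mul_ne_zero hp.ne_zero hq.ne_zero⟩
  obtain ⟨hmul, hinv, hinj, hsurj, hnz, hneg1⟩ := powSet_props p q hp hq hpodd a hgen hneg
  set T : Set (ZMod (p*q)) := powSet (p*q) a with hTdef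
  set r : ZMod (p*q) →+* ZMod p := ZMod.castHom (dvd_mul_right p q) (ZMod p) with hrdef
  have hp3 : 3 ≤ p := by
    have := hp.two_le
    have := Nat.odd_iff.mp hpodd
    omega
  have hq3 : 3 ≤ q := by
    have := hq.two_le
    have := Nat.odd_iff.mp hqodd
    omega
  have h0T : (0 : ZMod (p*q)) ∉ T := fun h => hnz 0 h (map_zero r)
  have hΓ' : ∀ x y : ZMod (p*q), Γ.Adj x y ↔ x - y ∈ T := by
    intro x y
    rw [hΓ]
    constructor
    · exact fun h => h.2
    · intro h
      refine ⟨?_, h⟩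
      rintro rfl
      exact h0T (by simpa using h)
  have hnegmem : ∀ s ∈ T, -s ∈ T := by
    intro s hs
    have := hmul _ hneg1 _ hs
    rwa [neg_one_mul] at this
  have hfib : ∀ w : ZMod p, {z : ZMod (p*q) | r z = w}.ncard = q :=
    zmod_fiber_ncard p q hp.ne_zero hq.ne_zero ((Nat.coprime_primes hp hq).mpr hpq)
  have hcardT : T.ncard = p - 1 := by
    have himg : r '' T = {w : ZMod p | w ≠ 0} := by
      ext w
      constructor
      · rintro ⟨s, hs, rfl⟩; exact hnz s hs
      · intro hw; exact hsurj w hw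
    have h1 := Set.ncard_image_of_injOn hinj
    rw [himg] at h1
    have h2 : {w : ZMod p | w ≠ 0} = ({0} : Set (ZMod p))ᶜ := by
      ext w; simp
    have h3 := Set.ncard_add_ncard_compl ({0} : Set (ZMod p))
    rw [Set.ncard_singleton, Nat.card_zmod] at h3
    rw [← h1, h2]
    omega
  have hlamd : ∀ d ∈ T, (T ∩ ((· + d) '' T)).ncard = lam := by
    intro d hd
    obtain ⟨d', hd', hdd⟩ := hinv d hd
    have hd'd : d' * d = 1 := by rw [mul_comm d' d]; exact hdd
    have hset : T ∩ ((· + d) '' T) = (fun w => d * w) '' (T ∩ ((· + 1) '' T)) := by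
      ext w
      constructor
      · rintro ⟨hwT, u, huT, rfl⟩
        refine ⟨d' * (u + d), ⟨hmul _ hd' _ hwT, ⟨d' * u, hmul _ hd' _ huT, ?_⟩⟩, ?_⟩
        · show d' * u + 1 = d' * (u + d)
          rw [mul_add, hd'd]
        · show d * (d' * (u + d)) = u + d
          rw [← mul_assoc, hdd, one_mul]
      · rintro ⟨y, ⟨hyT, z, hzT, rfl⟩, rfl⟩
        exact ⟨hmul _ hd _ hyT, ⟨d * z, hmul _ hd _ hzT, by show d * z + d = d * (z + 1); ring⟩⟩
    have hinjmul : Function.Injective (fun w : ZMod (p*q) => d * w) := by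
      intro u v h
      have := congrArg (fun w => d' * w) h
      simpa only [← mul_assoc, hd'd, one_mul] using this
    rw [hset, Set.ncard_image_of_injective _ hinjmul]
    exact hlam.symm
  set K : ZMod p → Set (Fin t × ZMod (p*q)) :=
    fun c => {v : Fin t × ZMod (p*q) | (π v.1)⁻¹ (r v.2) = c} with hKdef
  have hKcard : ∀ c, (K c).ncard = t * q := by
    intro c
    have hKeq : K c = {v : Fin t × ZMod (p*q) | v.2 ∈ {z : ZMod (p*q) | r z = π v.1 c}} := by
      ext ⟨j, z⟩
      simp only [hKdef, Set.mem_setOf_eq]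
      constructor
      · intro h; rw [← h]; simp
      · intro h; rw [h]; simp
    rw [hKeq, ncard_prod_fiber (fun j => {z : ZMod (p*q) | r z = π j c})]
    simp only [hfib]
    simp [Finset.sum_const, mul_comm]
  have hadj : ∀ (i j : Fin t) (x y : ZMod (p*q)),
      F.Adj (i, x) (j, y) ↔ (((i, x) : Fin t × ZMod (p*q)) ≠ (j, y) ∧
        ((i = j ∧ x - y ∈ T) ∨ (π i)⁻¹ (r x) = (π j)⁻¹ (r y))) := by
    intro i j x y
    rw [hF]
    simp only []
    rw [hΓ' x y]
  -- degree
  have hdeg : ∀ v : Fin t × ZMod (p*q), (F.neighborSet v).ncard = p + lam := by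
    rintro ⟨i, x⟩
    have hN : F.neighborSet (i, x)
        = (Prod.mk i '' ((fun s => x - s) '' T)) ∪ (K ((π i)⁻¹ (r x)) \ {(i, x)}) := by
      ext ⟨j, y⟩
      simp only [SimpleGraph.mem_neighborSet]
      rw [hadj]
      constructor
      · rintro ⟨hne, (⟨rfl, hxy⟩ | hcl)⟩
        · exact Or.inl ⟨y, ⟨x - y, hxy, by ring⟩, rfl⟩
        · exact Or.inr ⟨hcl.symm, by simp only [Set.mem_singleton_iff]; exact Ne.symm hne⟩
      · rintro (⟨y', ⟨s, hsT, rfl⟩, heq⟩ | ⟨hKm, hne⟩)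
        · obtain ⟨h1, h2⟩ := Prod.mk.inj heq
          subst h1; subst h2
          refine ⟨?_, Or.inl ⟨rfl, by rw [sub_sub_cancel]; exact hsT⟩⟩
          intro h
          have := congrArg Prod.snd h
          simp only [] at this
          rw [eq_comm, sub_eq_self] at this
          exact h0T (this ▸ hsT)
        · refine ⟨?_, Or.inr hKm.symm⟩
          intro h
          exact hne (by rw [← h]; simp)
    have hdisj : Disjoint (Prod.mk i '' ((fun s => x - s) '' T))
        (K ((π i)⁻¹ (r x)) \ {(i, x)}) := by
      rw [Set.disjoint_left]
      rintro ⟨j, y⟩ ⟨y', ⟨s, hsT, rfl⟩, heq⟩ hBm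
      obtain ⟨h1, h2⟩ := Prod.mk.inj heq
      subst h1; subst h2
      have h1 : (π i)⁻¹ (r (x - s)) = (π i)⁻¹ (r x) := hBm.1
      have h2 : r (x - s) = r x := (π i)⁻¹.injective h1
      rw [map_sub, sub_eq_self] at h2
      exact hnz s hsT h2
    rw [hN, Set.ncard_union_eq hdisj (Set.toFinite _) (Set.toFinite _)]
    have hAcard : (Prod.mk i '' ((fun s => x - s) '' T)).ncard = p - 1 := by
      rw [Set.ncard_image_of_injective _ (Prod.mk_right_injective i),
        Set.ncard_image_of_injective _ sub_right_injective, hcardT]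
    have hBcard : (K ((π i)⁻¹ (r x)) \ {(i, x)}).ncard = t * q - 1 := by
      rw [Set.ncard_diff_singleton_of_mem (show ((i, x) : Fin t × ZMod (p*q)) ∈ K _ from rfl),
        hKcard]
    rw [hAcard, hBcard]
    have h5 : t * q = lam + 2 := by rw [mul_comm]; exact htq
    rw [h5]
    omega
  -- common neighbours
  have hcommon : ∀ v w : Fin t × ZMod (p*q), F.Adj v w → (F.commonNeighbors v w).ncard = lam := by
    rintro ⟨i, x⟩ ⟨j, y⟩ hvw
    rw [hadj] at hvw
    obtain ⟨hne, hcase⟩ := hvw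
    rcases hcase with ⟨rfl, hd⟩ | hcl
    · -- Γ-edge
      have hkey : F.commonNeighbors (i, x) (i, y)
          = Prod.mk i '' ((fun s => y - s) '' (T ∩ ((· + -(x - y)) '' T))) := by
        ext ⟨j', z⟩
        rw [SimpleGraph.mem_commonNeighbors, hadj, hadj]
        constructor
        · rintro ⟨⟨hne1, hc1⟩, ⟨hne2, hc2⟩⟩
          rcases hc1 with ⟨rfl, h1T⟩ | h1c
          · rcases hc2 with ⟨-, h2T⟩ | h2c
            · exact ⟨z, ⟨y - z, ⟨h2T, ⟨x - z, h1T, by ring⟩⟩, by ring⟩, rfl⟩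
            · exfalso
              have h3 : r y = r z := (π i)⁻¹.injective h2c
              have h5 : x - z = x - y := hinj h1T hd (by rw [map_sub, map_sub, h3])
              have h6 : z = y := sub_right_injective h5
              exact hne2 (by rw [h6])
          · rcases hc2 with ⟨rfl, h2T⟩ | h2c
            · exfalso
              have h3 : r x = r z := (π i)⁻¹.injective h1c
              have h5 : y - z = -(x - y) := by
                refine hinj h2T (hnegmem _ hd) ?_
                rw [map_sub, map_neg, map_sub, h3]
                ring
              rw [neg_sub] at h5
              have h6 : z = x := sub_right_injective h5
              exact hne1 (by rw [h6])
            · exfalso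
              have h3 : (π i)⁻¹ (r x) = (π i)⁻¹ (r y) := h1c.trans h2c.symm
              have h4 : r x = r y := (π i)⁻¹.injective h3
              exact hnz _ hd (by rw [map_sub, h4, sub_self])
        · rintro ⟨z', ⟨s, ⟨hsT, u, huT, hu⟩, rfl⟩, heq⟩
          obtain ⟨h1, h2⟩ := Prod.mk.inj heq
          subst h1; subst h2
          have hxu : x - (y - s) = u := by rw [← hu]; ring
          constructor
          · refine ⟨?_, Or.inl ⟨rfl, by rw [hxu]; exact huT⟩⟩
            intro h
            have h7 := congrArg Prod.snd h
            simp only [] at h7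
            rw [← h7, sub_self] at hxu
            exact h0T (by rw [hxu]; exact huT)
          · refine ⟨?_, Or.inl ⟨rfl, by rw [sub_sub_cancel]; exact hsT⟩⟩
            intro h
            have := congrArg Prod.snd h
            simp only [] at this
            rw [eq_comm, sub_eq_self] at this
            exact h0T (this ▸ hsT)
      rw [hkey, Set.ncard_image_of_injective _ (Prod.mk_right_injective i),
        Set.ncard_image_of_injective _ sub_right_injective, hlamd _ (hnegmem _ hd)]
    · -- clique edge
      have hkey : F.commonNeighbors (i, x) (j, y)
          = K ((π i)⁻¹ (r x)) \ {(i, x), (j, y)} := by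
        ext ⟨j', z⟩
        rw [SimpleGraph.mem_commonNeighbors, hadj, hadj]
        constructor
        · rintro ⟨⟨hne1, hc1⟩, ⟨hne2, hc2⟩⟩
          rcases hc1 with ⟨rfl, h1T⟩ | h1c
          · rcases hc2 with ⟨heq2, h2T⟩ | h2c
            · exfalso
              subst heq2
              have h3 : r x = r y := (π j)⁻¹.injective hcl
              have h5 : x - z = y - z := hinj h1T h2T (by rw [map_sub, map_sub, h3])
              have h6 : x = y := sub_left_injective h5
              exact hne (by rw [h6])
            · exfalso
              have h3 : (π i)⁻¹ (r x) = (π i)⁻¹ (r z) := hcl.trans h2c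
              have h4 : r x = r z := (π i)⁻¹.injective h3
              exact hnz _ h1T (by rw [map_sub, h4, sub_self])
          · rcases hc2 with ⟨rfl, h2T⟩ | h2c
            · exfalso
              have h3 : (π j)⁻¹ (r y) = (π j)⁻¹ (r z) := hcl.symm.trans h1c
              have h4 : r y = r z := (π j)⁻¹.injective h3
              exact hnz _ h2T (by rw [map_sub, h4, sub_self])
            · refine ⟨h1c.symm, ?_⟩
              simp only [Set.mem_insert_iff, Set.mem_singleton_iff]
              push_neg
              exact ⟨Ne.symm hne1, Ne.symm hne2⟩
        · rintro ⟨hKm, hnm⟩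
          simp only [Set.mem_insert_iff, Set.mem_singleton_iff] at hnm
          push_neg at hnm
          exact ⟨⟨Ne.symm hnm.1, Or.inr hKm.symm⟩,
            ⟨Ne.symm hnm.2, Or.inr (hcl.symm.trans hKm.symm)⟩⟩
      have hsub : ({(i, x), (j, y)} : Set (Fin t × ZMod (p*q))) ⊆ K ((π i)⁻¹ (r x)) := by
        rintro u hu
        simp only [Set.mem_insert_iff, Set.mem_singleton_iff] at hu
        rcases hu with rfl | rfl
        · rfl
        · exact hcl.symm
      rw [hkey, Set.ncard_diff hsub, Set.ncard_pair hne, hKcard]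
      have h5 : t * q = lam + 2 := by rw [mul_comm]; exact htq
      omega
  refine ⟨⟨?_, hdeg, ?_, hcommon⟩, ?_, one_pos, K 0, ?_, ?_, ?_⟩
  · rw [Nat.card_eq_fintype_card, Fintype.card_prod, Fintype.card_fin, ZMod.card]
  · -- exists an edge
    refine ⟨(⟨0, ht⟩, 0), (⟨0, ht⟩, (p : ZMod (p*q))), ?_⟩
    rw [hadj]
    have hpne : ((p : ZMod (p*q))) ≠ 0 := by
      rw [Ne, ZMod.natCast_eq_zero_iff]
      intro hdvd
      have := Nat.le_of_dvd hp.pos hdvd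
      nlinarith
    refine ⟨?_, Or.inr ?_⟩
    · intro h
      have := congrArg Prod.snd h
      simp only [] at this
      exact hpne this.symm
    · have : r ((p : ZMod (p*q))) = 0 := by
        rw [map_natCast, ZMod.natCast_self]
      rw [map_zero, this]
  · -- F ≠ ⊤
    intro hFtop
    have hv := hdeg (⟨0, ht⟩, 0)
    have hNtop : F.neighborSet (⟨0, ht⟩, 0) = {((⟨0, ht⟩, 0) : Fin t × ZMod (p*q))}ᶜ := by
      ext u
      simp [SimpleGraph.mem_neighborSet, hFtop, eq_comm]
    rw [hNtop] at hv
    have h3 := Set.ncard_add_ncard_compl ({((⟨0, ht⟩, 0) : Fin t × ZMod (p*q))} :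
      Set (Fin t × ZMod (p*q)))
    rw [Set.ncard_singleton, Nat.card_eq_fintype_card, Fintype.card_prod,
      Fintype.card_fin, ZMod.card, hv] at h3
    -- 1 + (p + lam) = t * (p * q)
    have h5 : t * q = lam + 2 := by rw [mul_comm]; exact htq
    have h6 : t * (p * q) = (t * q) * p := by ring
    rw [h6, h5] at h3
    nlinarith
  · -- clique
    rintro ⟨i, x⟩ hx ⟨j, y⟩ hy hne
    rw [hadj]
    exact ⟨hne, Or.inr (hx.trans hy.symm)⟩
  · -- clique size
    rw [hKcard]
    rw [mul_comm] at htq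
    omega
  · -- 1-regular
    rintro ⟨j, y⟩ hv
    have hvK : (π j)⁻¹ (r y) ≠ 0 := hv
    have hw0 : r y - π j 0 ≠ 0 := by
      rw [sub_ne_zero]
      intro h
      exact hvK (by rw [h]; simp)
    obtain ⟨s0, hs0T, hs0⟩ := hsurj _ hw0
    have hsingle : {w ∈ K 0 | F.Adj (j, y) w} = {((j, y - s0) : Fin t × ZMod (p*q))} := by
      ext ⟨j', z⟩
      simp only [Set.mem_setOf_eq, Set.mem_singleton_iff]
      constructor
      · rintro ⟨hKm, hAdj⟩
        rw [hadj] at hAdj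
        obtain ⟨hne2, hc⟩ := hAdj
        rcases hc with ⟨rfl, hTz⟩ | hcc
        · have h1 : r z = π j 0 := by
            have := congrArg (π j) hKm
            simpa using this
          have h2 : y - z = s0 := hinj hTz hs0T (by rw [map_sub, h1, hs0])
          have h3 : z = y - s0 := by rw [← h2]; ring
          rw [h3]
        · exact absurd (hcc.trans hKm) hvK
      · intro heq
        obtain ⟨h1, h2⟩ := Prod.mk.inj heq
        subst h1; subst h2
        have hrz : r (y - s0) = π j' 0 := by
          rw [map_sub, hs0]
          ring
        refine ⟨show (π j')⁻¹ (r (y - s0)) = 0 by rw [hrz]; simp, ?_⟩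
        rw [hadj]
        refine ⟨?_, Or.inl ⟨rfl, by rw [sub_sub_cancel]; exact hs0T⟩⟩
        intro h
        have := congrArg Prod.snd h
        simp only [] at this
        rw [eq_comm, sub_eq_self] at this
        exact h0T (this ▸ hs0T)
    rw [hsingle, Set.ncard_singleton]
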